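/- arXiv:1701.03378 — 2 statements merged into one kernel-verified Lean document; each statement's English description precedes it below -/
import Mathlib

section
/- Let f ∈ F, f ≠ 0, be given by an admissible linear system 𝒜 = (u, A, v) of dimension n whose left family and right family are each K-linearly independent and such that 1 ∉ L(𝒜) and 1 ∉ R(𝒜). Then the standard inverse 𝒜⁻¹ = (e₁, [[Σ_n v, −Σ_n A Σ_n], [0, u Σ_n]], e_{n+1}), which is an admissible linear system of dimension n+1 for f⁻¹, also has K-linearly independent left family and K-linearly independent right family. -/
open Matrix

/-- The row vector `e₁ = (1,0,…,0)`. -/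
def e1Row (F : Type*) [Semiring F] (n : ℕ) [NeZero n] : Matrix (Fin 1) (Fin n) F :=
  Matrix.of fun _ j => if j = 0 then 1 else 0

/-- The permutation matrix `Σ_n` reversing the order of rows/columns. -/
def revMat (F : Type*) [Semiring F] (n : ℕ) : Matrix (Fin n) (Fin n) F :=
  Matrix.of fun p q => if q = p.rev then 1 else 0

section Aux

variable {F : Type*} [Semiring F] {n : ℕ}

lemma revMat_mul_apply {m : Type*} (M : Matrix (Fin n) m F) (p : Fin n) (q : m) :
    (revMat F n * M) p q = M p.rev q := by
  simp [revMat, Matrix.mul_apply]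

lemma mul_revMat_apply {m : Type*} [Fintype m] (M : Matrix m (Fin n) F) (p : m) (q : Fin n) :
    (M * revMat F n) p q = M p q.rev := by
  simp only [revMat, Matrix.mul_apply, Matrix.of_apply, mul_ite, mul_one, mul_zero]
  rw [Finset.sum_eq_single q.rev]
  · simp [Fin.rev_rev]
  · intro b _ hb
    rw [if_neg]
    intro h
    exact hb (by rw [h, Fin.rev_rev])
  · simp

lemma revMat_mul_revMat : revMat F n * revMat F n = (1 : Matrix (Fin n) (Fin n) F) := by
  ext p q
  rw [revMat_mul_apply]
  simp [revMat, Matrix.one_apply, Fin.rev_rev, eq_comm]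

lemma e1Row_mul_apply [NeZero n] {m : Type*} (M : Matrix (Fin n) m F) (i : Fin 1) (j : m) :
    (e1Row F n * M) i j = M 0 j := by
  simp [e1Row, Matrix.mul_apply]

end Aux

/-- Inverse of type (0,0): if `f ≠ 0` is given by a minimal ALS `(e₁, A, v)` of
dimension `n` with `1 ∉ L(𝒜)` and `1 ∉ R(𝒜)`, then the standard inverse
`𝒜⁻¹ = (e₁, [[Σ v, −Σ A Σ], [0, e₁ Σ]], e_{n+1})`, an ALS of dimension `n + 1` for
`f⁻¹`, also has `K`-linearly independent left and right families. -/
theorem inverse_type_zero_zero {K F : Type*} [Field K] [DivisionRing F] [Algebra K F]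
    {n : ℕ} [NeZero n]
    (f : F) (hne : f ≠ 0)
    (A B : Matrix (Fin n) (Fin n) F) (v : Matrix (Fin n) (Fin 1) K)
    (hAB : A * B = 1) (hBA : B * A = 1)
    (hf : f = (B * v.map (algebraMap K F)) 0 0)
    (hleft : LinearIndependent K fun p => (B * v.map (algebraMap K F)) p 0)
    (hright : LinearIndependent K fun q => B 0 q)
    (honeL : (1 : F) ∉ Submodule.span K
      (Set.range fun p => (B * v.map (algebraMap K F)) p 0))
    (honeR : (1 : F) ∉ Submodule.span K (Set.range fun q => B 0 q)) :
    let A' : Matrix (Fin n ⊕ Fin 1) (Fin 1 ⊕ Fin n) F :=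
      fromBlocks (revMat F n * v.map (algebraMap K F)) (-(revMat F n * A * revMat F n))
        0 (e1Row F n * revMat F n)
    let v' : Matrix (Fin n ⊕ Fin 1) (Fin 1) F :=
      fromRows 0 (1 : Matrix (Fin 1) (Fin 1) F)
    ∃ B' : Matrix (Fin 1 ⊕ Fin n) (Fin n ⊕ Fin 1) F,
      A' * B' = 1 ∧ B' * A' = 1 ∧
      (B' * v') (Sum.inl 0) 0 = f⁻¹ ∧
      (LinearIndependent K fun p => (B' * v') p 0) ∧
      (LinearIndependent K fun q => B' (Sum.inl 0) q) := by
  intro A' v'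
  have hA'def : A' = fromBlocks (revMat F n * v.map (algebraMap K F))
      (-(revMat F n * A * revMat F n)) 0 (e1Row F n * revMat F n) := rfl
  have hv'def : v' = fromRows 0 (1 : Matrix (Fin 1) (Fin 1) F) := rfl
  have hne' : f⁻¹ ≠ 0 := inv_ne_zero hne
  set vF : Matrix (Fin n) (Fin 1) F := v.map (algebraMap K F) with hvFdef
  have hSig : revMat F n * revMat F n = (1 : Matrix (Fin n) (Fin n) F) := revMat_mul_revMat
  have s1 : ∀ {m : Type} (M : Matrix (Fin n) m F), revMat F n * (revMat F n * M) = M := by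
    intro m M; rw [← Matrix.mul_assoc, hSig, Matrix.one_mul]
  have s2 : ∀ {m : Type} (M : Matrix (Fin n) m F), A * (B * M) = M := by
    intro m M; rw [← Matrix.mul_assoc, hAB, Matrix.one_mul]
  have s3 : ∀ {m : Type} (M : Matrix (Fin n) m F), B * (A * M) = M := by
    intro m M; rw [← Matrix.mul_assoc, hBA, Matrix.one_mul]
  have hUs : e1Row F n * (B * vF) = f • (1 : Matrix (Fin 1) (Fin 1) F) := by
    ext i j
    fin_cases i <;> fin_cases j
    rw [e1Row_mul_apply]
    simp [hf, Matrix.one_apply]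
  have s4 : ∀ {m : Type} (M : Matrix (Fin 1) m F),
      e1Row F n * (B * (vF * M)) = f • M := by
    intro m M
    calc e1Row F n * (B * (vF * M)) = (e1Row F n * (B * vF)) * M := by
          rw [Matrix.mul_assoc, Matrix.mul_assoc]
      _ = f • M := by rw [hUs, Matrix.smul_mul, Matrix.one_mul]
  -- the candidate inverse matrix
  set c : Matrix (Fin 1) (Fin 1) F := f⁻¹ • 1 with hcdef
  refine ⟨fromBlocks (c * (e1Row F n * (B * revMat F n))) c
      (revMat F n * (B * (vF * (c * (e1Row F n * (B * revMat F n))))) -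
        revMat F n * (B * revMat F n))
      (revMat F n * (B * (vF * c))), ?_, ?_, ?_, ?_, ?_⟩
  · rw [hA'def, fromBlocks_multiply, ← fromBlocks_one, Matrix.fromBlocks_inj]
    refine ⟨?_, ?_, ?_, ?_⟩ <;>
      simp only [hcdef, Matrix.mul_sub, Matrix.sub_mul, Matrix.neg_mul, Matrix.mul_neg,
        Matrix.zero_mul, Matrix.mul_zero, Matrix.mul_assoc, Matrix.smul_mul, Matrix.one_mul,
        Matrix.mul_one, add_zero, zero_add, smul_smul, inv_mul_cancel₀ hne,
        mul_inv_cancel₀ hne, one_smul, s1, s2, s3, s4, hUs, hSig]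
    all_goals abel
  · rw [hA'def, fromBlocks_multiply, ← fromBlocks_one, Matrix.fromBlocks_inj]
    refine ⟨?_, ?_, ?_, ?_⟩ <;>
      simp only [hcdef, Matrix.mul_sub, Matrix.sub_mul, Matrix.neg_mul, Matrix.mul_neg,
        Matrix.zero_mul, Matrix.mul_zero, Matrix.mul_assoc, Matrix.smul_mul, Matrix.one_mul,
        Matrix.mul_one, add_zero, zero_add, smul_smul, inv_mul_cancel₀ hne,
        mul_inv_cancel₀ hne, one_smul, s1, s2, s3, s4, hUs, hSig]
    all_goals abel
  · rw [hv'def, fromBlocks_mul_fromRows]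
    simp [hcdef, Matrix.smul_apply, Matrix.one_apply]
  -- left family
  · have hBv : (fromBlocks (c * (e1Row F n * (B * revMat F n))) c
        (revMat F n * (B * (vF * (c * (e1Row F n * (B * revMat F n))))) -
          revMat F n * (B * revMat F n))
        (revMat F n * (B * (vF * c))) : Matrix (Fin 1 ⊕ Fin n) (Fin n ⊕ Fin 1) F) * v' =
        fromRows c (revMat F n * (B * (vF * c))) := by
      rw [hv'def, fromBlocks_mul_fromRows]
      simp
    rw [hBv]
    have key : (fun p => (fromRows c (revMat F n * (B * (vF * c))) : Matrix (Fin 1 ⊕ Fin n) (Fin 1) F) p 0) =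
        (LinearMap.mulRight K f⁻¹) ∘
          Sum.elim (fun _ : Fin 1 => (1 : F)) (fun j : Fin n => (B * vF) j.rev 0) := by
      funext p
      cases p with
      | inl i =>
        simp [hcdef, Matrix.smul_apply, Matrix.one_apply, Subsingleton.elim i 0]
      | inr j =>
        have : revMat F n * (B * (vF * c)) = revMat F n * ((B * vF) * c) := by
          rw [Matrix.mul_assoc]
        rw [Function.comp_apply, Sum.elim_inr, fromRows_apply_inr, this, revMat_mul_apply]
        simp [hcdef, Matrix.mul_apply, Matrix.smul_apply, Matrix.one_apply, Finset.sum_mul]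
    rw [key]
    apply LinearIndependent.map'
    · refine LinearIndependent.sum_type ?_ ?_ ?_
      · exact (linearIndependent_unique_iff (v := fun _ : Fin 1 => (1 : F))).mpr one_ne_zero
      · exact hleft.comp Fin.rev Fin.rev_injective
      · have hr : (Set.range fun j : Fin n => (B * vF) j.rev 0)
            = Set.range fun p => (B * vF) p 0 :=
          Fin.rev_surjective.range_comp fun p => (B * vF) p 0
        rw [Set.range_const, hr]
        exact Disjoint.symm (Submodule.disjoint_span_singleton.mpr fun h1 => absurd h1 honeL)
    · rw [LinearMap.ker_eq_bot]
      exact fun a b h => mul_left_injective₀ hne' h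
  -- right family
  · have key : (fun q => (fromBlocks (c * (e1Row F n * (B * revMat F n))) c
        (revMat F n * (B * (vF * (c * (e1Row F n * (B * revMat F n))))) -
          revMat F n * (B * revMat F n))
        (revMat F n * (B * (vF * c))) : Matrix (Fin 1 ⊕ Fin n) (Fin n ⊕ Fin 1) F) (Sum.inl 0) q) =
        (LinearMap.mulLeft K f⁻¹) ∘
          Sum.elim (fun j : Fin n => B 0 j.rev) (fun _ : Fin 1 => (1 : F)) := by
      funext q
      cases q with
      | inl j =>
        have : (c * (e1Row F n * (B * revMat F n))) 0 j
            = f⁻¹ * (e1Row F n * (B * revMat F n)) 0 j := by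
          simp [hcdef, Matrix.mul_apply, Matrix.smul_apply, Matrix.one_apply]
        rw [fromBlocks_apply₁₁, this, e1Row_mul_apply, mul_revMat_apply]
        simp
      | inr i =>
        simp [hcdef, Matrix.smul_apply, Matrix.one_apply, Subsingleton.elim i 0]
    rw [key]
    apply LinearIndependent.map'
    · refine LinearIndependent.sum_type ?_ ?_ ?_
      · exact hright.comp Fin.rev Fin.rev_injective
      · exact (linearIndependent_unique_iff (v := fun _ : Fin 1 => (1 : F))).mpr one_ne_zero
      · have hr : (Set.range fun j : Fin n => B 0 j.rev)
            = Set.range fun q => B 0 q :=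
          Fin.rev_surjective.range_comp fun q => B 0 q
        rw [Set.range_const, hr]
        exact Submodule.disjoint_span_singleton.mpr fun h1 => absurd h1 honeR
    · rw [LinearMap.ker_eq_bot]
      exact fun a b h => mul_right_injective₀ hne' h
end

section
/- Let f, g ∈ F be given by admissible linear systems 𝒜_f = (u_f, A_f, v_f) and 𝒜_g = (u_g, A_g, v_g), and let 𝒜_f + 𝒜_g = (e₁, [[A_f, −A_f u_fᵀ u_g], [0, A_g]], [v_f; v_g]) and 𝒜_f · 𝒜_g = (e₁, [[A_f, −v_f u_g], [0, A_g]], [0; v_g]) be the ALSs for f + g and f g built from them. Then the K-linear spans of the right families satisfy R(𝒜_f + 𝒜_g) = R(𝒜_f) + R(𝒜_g) (sum of K-subspaces of F), and R(𝒜_f · 𝒜_g) = R(𝒜_f) + f R(𝒜_g), where f R(𝒜_g) = { f w : w ∈ R(𝒜_g) }; in particular R(𝒜_f) ⊆ R(𝒜_f · 𝒜_g). -/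
open Matrix

lemma e1Row_mul {F : Type*} [Semiring F] {n m : ℕ} [NeZero n]
    (M : Matrix (Fin n) (Fin m) F) (j : Fin m) :
    (e1Row F n * M) 0 j = M 0 j := by
  simp [e1Row, Matrix.mul_apply, ite_mul]

/-- Spans of right families under the rational operations: for the sum ALS one has
`R(𝒜_f + 𝒜_g) = R(𝒜_f) + R(𝒜_g)`, and for the product ALS
`R(𝒜_f · 𝒜_g) = R(𝒜_f) + f·R(𝒜_g)`; in particular `R(𝒜_f) ⊆ R(𝒜_f · 𝒜_g)`. -/
theorem right_family_spans {K F : Type*} [Field K] [DivisionRing F] [Algebra K F]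
    {nf ng : ℕ} [NeZero nf] [NeZero ng]
    (f g : F)
    (Af Bf : Matrix (Fin nf) (Fin nf) F) (vf : Matrix (Fin nf) (Fin 1) K)
    (Ag Bg : Matrix (Fin ng) (Fin ng) F) (vg : Matrix (Fin ng) (Fin 1) K)
    (hAf : Af * Bf = 1) (hAf' : Bf * Af = 1)
    (hAg : Ag * Bg = 1) (hAg' : Bg * Ag = 1)
    (hf : f = (e1Row F nf * Bf * vf.map (algebraMap K F)) 0 0)
    (hg : g = (e1Row F ng * Bg * vg.map (algebraMap K F)) 0 0)
    (Asum Bsum : Matrix (Fin nf ⊕ Fin ng) (Fin nf ⊕ Fin ng) F)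
    (hAsum : Asum = fromBlocks Af
      (-(Af * Matrix.single (0 : Fin nf) (0 : Fin ng) (1 : F))) 0 Ag)
    (hBsum : Asum * Bsum = 1) (hBsum' : Bsum * Asum = 1)
    (Aprod Bprod : Matrix (Fin nf ⊕ Fin ng) (Fin nf ⊕ Fin ng) F)
    (hAprod : Aprod = fromBlocks Af (-(vf.map (algebraMap K F) * e1Row F ng)) 0 Ag)
    (hBprod : Aprod * Bprod = 1) (hBprod' : Bprod * Aprod = 1) :
    (Submodule.span K (Set.range fun q => Bsum (Sum.inl 0) q)
      = Submodule.span K (Set.range fun q => Bf 0 q)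
        ⊔ Submodule.span K (Set.range fun q => Bg 0 q)) ∧
    (Submodule.span K (Set.range fun q => Bprod (Sum.inl 0) q)
      = Submodule.span K (Set.range fun q => Bf 0 q)
        ⊔ Submodule.map (LinearMap.mulLeft K f)
            (Submodule.span K (Set.range fun q => Bg 0 q))) ∧
    (Submodule.span K (Set.range fun q => Bf 0 q)
      ≤ Submodule.span K (Set.range fun q => Bprod (Sum.inl 0) q)) := by
  have hinv : ∀ (X Y Z : Matrix (Fin nf ⊕ Fin ng) (Fin nf ⊕ Fin ng) F),
      Y * X = 1 → X * Z = 1 → Y = Z := by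
    intro X Y Z h1 h2
    calc Y = Y * (X * Z) := by rw [h2, mul_one]
    _ = (Y * X) * Z := by rw [mul_assoc]
    _ = Z := by rw [h1, one_mul]
  set E := Matrix.single (0 : Fin nf) (0 : Fin ng) (1 : F) with hE
  -- the inverse of the sum system matrix
  have hBsumEq : Bsum = fromBlocks Bf (E * Bg) 0 Bg := by
    apply hinv Asum _ _ hBsum'
    rw [hAsum, fromBlocks_multiply]
    have h1 : Af * (E * Bg) + -(Af * E) * Bg = 0 := by
      rw [Matrix.neg_mul, Matrix.mul_assoc, add_neg_cancel]
    rw [hAf, hAg, h1]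
    simp [← fromBlocks_one]
  -- the inverse of the product system matrix
  set vfm := vf.map (algebraMap K F) with hvfm
  have hBprodEq : Bprod = fromBlocks Bf (Bf * vfm * (e1Row F ng * Bg)) 0 Bg := by
    apply hinv Aprod _ _ hBprod'
    rw [hAprod, fromBlocks_multiply]
    have h1 : Af * (Bf * vfm * (e1Row F ng * Bg)) + -(vfm * e1Row F ng) * Bg = 0 := by
      have h2 : Af * (Bf * vfm * (e1Row F ng * Bg)) = vfm * (e1Row F ng * Bg) := by
        rw [← Matrix.mul_assoc Af, ← Matrix.mul_assoc Af, hAf, Matrix.one_mul]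
      rw [h2, Matrix.neg_mul, Matrix.mul_assoc, add_neg_cancel]
    rw [hAf, hAg, h1]
    simp [← fromBlocks_one]
  have hEBg : ∀ q, (E * Bg) 0 q = Bg 0 q := by
    intro q
    simp [hE, Matrix.mul_apply, Matrix.single, ite_and, ite_mul]
  have hfval : f = (Bf * vfm) 0 0 := by
    rw [hf, Matrix.mul_assoc]
    exact e1Row_mul _ _
  have hprodEntry : ∀ q, (Bf * vfm * (e1Row F ng * Bg)) 0 q = f * Bg 0 q := by
    intro q
    rw [Matrix.mul_apply, Fin.sum_univ_one, e1Row_mul, hfval]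
  -- sum part
  have hsum : (fun q : Fin nf ⊕ Fin ng => Bsum (Sum.inl 0) q)
      = Sum.elim (fun q => Bf 0 q) (fun q => Bg 0 q) := by
    funext q
    cases q with
    | inl q => rw [hBsumEq]; rfl
    | inr q => rw [hBsumEq]; exact hEBg q
  have hprod : (fun q : Fin nf ⊕ Fin ng => Bprod (Sum.inl 0) q)
      = Sum.elim (fun q => Bf 0 q) (fun q => f * Bg 0 q) := by
    funext q
    cases q with
    | inl q => rw [hBprodEq]; rfl
    | inr q => rw [hBprodEq]; exact hprodEntry q
  have hmap : Submodule.map (LinearMap.mulLeft K f)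
      (Submodule.span K (Set.range fun q => Bg 0 q))
      = Submodule.span K (Set.range fun q => f * Bg 0 q) := by
    rw [Submodule.map_span, ← Set.range_comp]
    rfl
  refine ⟨?_, ?_, ?_⟩
  · rw [hsum, Set.Sum.elim_range, Submodule.span_union]
  · rw [hprod, Set.Sum.elim_range, Submodule.span_union, hmap]
  · rw [hprod, Set.Sum.elim_range, Submodule.span_union]
    exact le_sup_left
end
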